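/- Let n ≥ 2, G > 0, A > −1, B > 0, C > 0, α ∈ [0,1]. Suppose a: (0,∞) → (0,∞) is differentiable, a' > 0, a(t) → ∞ as t → ∞, and satisfies (a'/a)² = (16πG/(n(n−1)))·(1+A)^(−1/(α+1))·(C·a^(−n(1+A)(α+1)) + B)^(1/(α+1)). Then lim_{t→∞} a'(t)/a(t) = 4·√(πG/(n(n−1)))·(B/(1+A))^(1/(2(α+1))). -/
import Mathlib


open Real Filter

/-- Universal asymptotic growth-rate formula in the Chaplygin fluid universe:
any expanding solution of the flat Friedmann equation has
`a'/a → 4√(πG/(n(n−1))) · (B/(1+A))^{1/(2(α+1))}` as `t → ∞`. -/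
theorem chaplygin_universal_growth_rate (n : ℕ) (hn : 2 ≤ n)
    (G A B C α : ℝ) (hG : 0 < G) (hA : -1 < A) (hB : 0 < B) (hC : 0 < C)
    (hα0 : 0 ≤ α) (hα1 : α ≤ 1) (a : ℝ → ℝ)
    (hpos : ∀ t > (0 : ℝ), 0 < a t)
    (hdiff : ∀ t > (0 : ℝ), DifferentiableAt ℝ a t)
    (hinc : ∀ t > (0 : ℝ), 0 < deriv a t)
    (hinf : Tendsto a atTop atTop)
    (hode : ∀ t > (0 : ℝ),
      (deriv a t / a t) ^ 2 =
        (16 * π * G / ((n : ℝ) * ((n : ℝ) - 1))) * (1 + A) ^ (-(1 / (α + 1))) *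
          (C * a t ^ (-((n : ℝ) * (1 + A) * (α + 1))) + B) ^ (1 / (α + 1))) :
    Tendsto (fun t => deriv a t / a t) atTop
      (nhds (4 * Real.sqrt (π * G / ((n : ℝ) * ((n : ℝ) - 1))) *
        (B / (1 + A)) ^ (1 / (2 * (α + 1))))) := by
  have hA1 : (0:ℝ) < 1 + A := by linarith
  have hα1' : (0:ℝ) < α + 1 := by linarith
  have hn2 : (2:ℝ) ≤ (n:ℝ) := by exact_mod_cast hn
  have hpi : (0:ℝ) < π := Real.pi_pos
  have hD : (0:ℝ) < (n:ℝ) * ((n:ℝ) - 1) := by nlinarith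
  set D : ℝ := (n:ℝ) * ((n:ℝ) - 1) with hDdef
  set p : ℝ := 1 / (α + 1) with hpdef
  have hp : 0 < p := by positivity
  set m : ℝ := (n:ℝ) * (1 + A) * (α + 1) with hmdef
  have hmpos : 0 < m := by
    have hn0 : (0:ℝ) < (n:ℝ) := by linarith
    rw [hmdef]; positivity
  set K0 : ℝ := 16 * π * G / D * (1 + A) ^ (-p) with hK0
  have hK0pos : 0 < K0 := by
    rw [hK0]; positivity
  set L : ℝ := 4 * Real.sqrt (π * G / D) * (B / (1 + A)) ^ (1 / (2 * (α + 1))) with hLdef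
  have hL0 : 0 ≤ L := by positivity
  have hLsq : L ^ 2 = K0 * B ^ p := by
    have h2e : 1 / (2 * (α + 1)) + 1 / (2 * (α + 1)) = p := by
      rw [hpdef]; ring_nf
      rw [show (2 + α * 2 : ℝ) = 2 * (1 + α) by ring, mul_inv, mul_comm (2:ℝ)⁻¹,
        mul_assoc, inv_mul_cancel₀ (two_ne_zero), mul_one]
    have hx : (0:ℝ) < B / (1 + A) := by positivity
    have hsq : ((B / (1 + A)) ^ (1 / (2 * (α + 1)))) ^ 2
        = (B / (1 + A)) ^ p := by
      rw [sq, ← Real.rpow_add hx, h2e]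
    rw [hLdef, mul_pow, mul_pow, hsq, Real.sq_sqrt (by positivity),
      Real.div_rpow hB.le hA1.le, hK0, Real.rpow_neg hA1.le]
    ring
  have hev : (fun t => deriv a t / a t)
      =ᶠ[atTop] fun t => Real.sqrt (K0 * (C * a t ^ (-m) + B) ^ p) := by
    filter_upwards [eventually_gt_atTop 0] with t ht
    have hq : 0 < deriv a t / a t := div_pos (hinc t ht) (hpos t ht)
    rw [← hode t ht]
    exact (Real.sqrt_sq hq.le).symm
  have h1 : Tendsto (fun t => a t ^ (-m)) atTop (nhds 0) :=
    (tendsto_rpow_neg_atTop hmpos).comp hinf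
  have h2 : Tendsto (fun t => C * a t ^ (-m) + B) atTop (nhds B) := by
    have := (h1.const_mul C).add_const B
    simpa using this
  have h3 : Tendsto (fun t => (C * a t ^ (-m) + B) ^ p) atTop (nhds (B ^ p)) :=
    (Real.continuousAt_rpow_const B p (Or.inr hp.le)).tendsto.comp h2
  have h4 : Tendsto (fun t => K0 * (C * a t ^ (-m) + B) ^ p) atTop
      (nhds (K0 * B ^ p)) := h3.const_mul K0
  have h5 : Tendsto (fun t => Real.sqrt (K0 * (C * a t ^ (-m) + B) ^ p)) atTop
      (nhds (Real.sqrt (K0 * B ^ p))) :=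
    (Real.continuous_sqrt.tendsto _).comp h4
  have hsL : Real.sqrt (K0 * B ^ p) = L := by
    rw [← hLsq, Real.sqrt_sq hL0]
  exact Tendsto.congr' hev.symm (hsL ▸ h5)
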